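/- Let R be a finite-dimensional unital ℂ-algebra, G a finitely generated abelian group, and ρ : G → Rˣ a group homomorphism into the group of units of R. Then there exist a finite set X of group homomorphisms χ : G → ℂˣ and nonzero idempotents (π_χ)_{χ∈X} lying in the commutative unital subalgebra of R generated by the image of ρ, such that π_χ π_ψ = 0 for χ ≠ ψ, Σ_{χ∈X} π_χ = 1, and for every g ∈ G and every χ ∈ X the element (ρ(g) − χ(g)·1)·π_χ is nilpotent. -/

import Mathlib

open Finset

theorem my_aux (A : Type*) [Ring A] [Algebra ℂ A] [FiniteDimensional ℂ A]
    (hc : ∀ x y : A, x * y = y * x)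
    (G : Type*) [CommGroup G] (ρ : G →* Aˣ) :
    ∃ (X : Finset (G →* ℂˣ)) (π : (G →* ℂˣ) → A),
      (∀ χ ∈ X, π χ ≠ 0) ∧
      (∀ χ ∈ X, IsIdempotentElem (π χ)) ∧
      (∀ χ ∈ X, ∀ ψ ∈ X, χ ≠ ψ → π χ * π ψ = 0) ∧
      (∑ χ ∈ X, π χ) = 1 ∧
      (∀ g : G, ∀ χ ∈ X, IsNilpotent ((((ρ g : Aˣ) : A) - algebraMap ℂ A (χ g)) * π χ)) := by
  classical
  letI : CommRing A := { ‹Ring A› with mul_comm := hc }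
  haveI : IsArtinianRing A := IsArtinianRing.of_finite ℂ A
  rcases subsingleton_or_nontrivial A with hA | hA
  · exact ⟨∅, fun _ => 0, by simp, by simp, by simp, Subsingleton.elim _ _, by simp⟩
  -- the index type of maximal ideals
  set ι := {I : Ideal A | I.IsMaximal} with hι
  haveI : Finite ι := (IsArtinianRing.setOfPred_isMaximal_finite A).to_subtype
  letI : Fintype ι := Fintype.ofFinite ι
  haveI hmax : ∀ I : ι, I.1.IsMaximal := fun I => I.2
  letI : ∀ I : ι, Field (A ⧸ I.1) := fun I => Ideal.Quotient.field I.1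
  haveI : ∀ I : ι, Module.Finite ℂ (A ⧸ I.1) := fun I =>
    Module.Finite.of_surjective (Ideal.Quotient.mkₐ ℂ I.1).toLinearMap
      (Ideal.Quotient.mkₐ_surjective ℂ I.1)
  -- the isomorphisms ℂ ≃ A ⧸ I
  have hbij : ∀ I : ι, Function.Bijective (algebraMap ℂ (A ⧸ I.1)) := fun I =>
    ⟨(algebraMap ℂ (A ⧸ I.1)).injective,
      IsAlgClosed.algebraMap_bijective_of_isIntegral.2⟩
  let iso : ∀ I : ι, ℂ ≃ₐ[ℂ] (A ⧸ I.1) := fun I =>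
    AlgEquiv.ofBijective (Algebra.ofId ℂ (A ⧸ I.1)) (hbij I)
  let lam : ∀ I : ι, A →ₐ[ℂ] ℂ := fun I =>
    ((iso I).symm.toAlgHom).comp (Ideal.Quotient.mkₐ ℂ I.1)
  have hlam_zero : ∀ (I : ι) (x : A), lam I x = 0 ↔ x ∈ I.1 := by
    intro I x
    simp only [lam, AlgHom.comp_apply, Ideal.Quotient.mkₐ_eq_mk, AlgEquiv.coe_algHom,
      EmbeddingLike.map_eq_zero_iff]
    exact Ideal.Quotient.eq_zero_iff_mem
  -- vanishing on all characters implies nilpotent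
  have hker : ∀ x : A, (∀ I : ι, lam I x = 0) → IsNilpotent x := by
    intro x hx
    rw [← mem_nilradical, nilradical_eq_sInf, Ideal.mem_sInf]
    intro P hP
    haveI : P.IsPrime := hP
    have hm := IsArtinianRing.isMaximal_of_isPrime P
    exact (hlam_zero ⟨P, hm⟩ x).mp (hx ⟨P, hm⟩)
  -- the combined map Φ
  let Φ : A →+* (ι → ℂ) := Pi.ringHom fun I => (lam I).toRingHom
  have hΦker : ∀ x ∈ RingHom.ker Φ, IsNilpotent x := by
    intro x hx
    refine hker x fun I => ?_
    have : Φ x = 0 := hx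
    exact congrFun this I
  have hΦsurj : Function.Surjective Φ := by
    intro y
    obtain ⟨r, hr⟩ := Ideal.pi_quotient_surjective
      (I := fun I : ι => I.1)
      (fun I J hIJ => Ideal.isCoprime_iff_sup_eq.mpr <|
        (hmax I).coprime_of_ne (hmax J) (by
          simpa [Subtype.ext_iff] using hIJ))
      (fun I => iso I (y I))
    refine ⟨r, funext fun I => ?_⟩
    have : (Ideal.Quotient.mk I.1 r : A ⧸ I.1) = iso I (y I) := hr I
    show lam I r = y I
    simp only [lam, AlgHom.comp_apply, Ideal.Quotient.mkₐ_eq_mk, this]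
    exact (iso I).symm_apply_apply (y I)
  -- lift the standard complete orthogonal idempotents
  obtain ⟨e, he, hΦe⟩ := CompleteOrthogonalIdempotents.lift_of_isNilpotent_ker Φ hΦker
    (CompleteOrthogonalIdempotents.single (fun _ : ι => ℂ))
    (fun i => hΦsurj _)
  have hlam_e : ∀ I J : ι, lam J (e I) = if J = I then 1 else 0 := by
    intro I J
    have : Φ (e I) = Pi.single I 1 := congrFun hΦe I
    have := congrFun this J
    rw [Pi.single_apply] at this
    exact this
  -- characters
  let c : ι → (G →* ℂˣ) := fun I =>
    (Units.map (lam I).toRingHom.toMonoidHom).comp ρ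
  set π : (G →* ℂˣ) → A := fun χ => ∑ I ∈ Finset.univ.filter fun I => c I = χ, e I with hπ
  refine ⟨Finset.image c Finset.univ, π, ?_, ?_, ?_, ?_, ?_⟩
  · -- nonzero
    rintro χ hχ h0
    simp only [hπ] at h0
    obtain ⟨I, -, hI⟩ := Finset.mem_image.mp hχ
    have h1 : lam I (∑ J ∈ Finset.univ.filter fun J => c J = χ, e J) = 1 := by
      rw [map_sum]
      rw [Finset.sum_congr rfl fun J _ => hlam_e J I]
      rw [Finset.sum_ite_eq]
      simp [hI]
    rw [h0] at h1
    simp at h1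
  · -- idempotent
    intro χ hχ
    simp only [hπ]
    exact he.toOrthogonalIdempotents.isIdempotentElem_sum
  · -- orthogonal
    intro χ hχ ψ hψ hne
    simp only [hπ]
    rw [Finset.sum_mul_sum]
    refine Finset.sum_eq_zero fun I hI => Finset.sum_eq_zero fun J hJ => ?_
    have hI' := (Finset.mem_filter.mp hI).2
    have hJ' := (Finset.mem_filter.mp hJ).2
    exact he.toOrthogonalIdempotents.ortho (fun h => hne (by rw [← hI', h, hJ']))
  · -- sum
    simp only [hπ]
    rw [Finset.sum_fiberwise_of_maps_to (fun I _ => Finset.mem_image_of_mem c (Finset.mem_univ I))]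
    exact he.complete
  · -- nilpotency
    intro g χ hχ
    simp only [hπ]
    refine hker _ fun J => ?_
    rw [map_mul, map_sub]
    rw [map_sum, Finset.sum_congr rfl fun I _ => hlam_e I J]
    rw [Finset.sum_ite_eq]
    by_cases hJ : c J = χ
    · simp only [Finset.mem_filter, Finset.mem_univ, hJ, and_self, if_true, if_pos, mul_one]
      have h1 : lam J ((ρ g : Aˣ) : A) = ((χ g : ℂˣ) : ℂ) := by
        rw [← hJ]; rfl
      rw [h1, AlgHom.commutes]
      simp [Algebra.algebraMap_self_apply]
    · simp [hJ]

/-- **Monodromy block decomposition, algebraic form.**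
Let `R` be a finite-dimensional unital `ℂ`-algebra, `G` a finitely generated abelian
group and `ρ : G → Rˣ` a group homomorphism.  Then there is a finite set `X` of
characters `χ : G → ℂˣ` and nonzero idempotents `π χ` lying in the (commutative unital)
subalgebra of `R` generated by the image of `ρ`, which are pairwise orthogonal, sum to `1`,
and such that `(ρ g − χ g · 1) · π χ` is nilpotent for all `g ∈ G`, `χ ∈ X`. -/
theorem stmt_5 (R : Type*) [Ring R] [Algebra ℂ R] [FiniteDimensional ℂ R]
    (G : Type*) [CommGroup G] [Group.FG G] (ρ : G →* Rˣ) :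
    ∃ (X : Finset (G →* ℂˣ)) (π : (G →* ℂˣ) → R),
      (∀ χ ∈ X, π χ ≠ 0) ∧
      (∀ χ ∈ X, IsIdempotentElem (π χ)) ∧
      (∀ χ ∈ X, π χ ∈ Algebra.adjoin ℂ (Set.range fun g : G => ((ρ g : Rˣ) : R))) ∧
      (∀ χ ∈ X, ∀ ψ ∈ X, χ ≠ ψ → π χ * π ψ = 0) ∧
      (∑ χ ∈ X, π χ) = 1 ∧
      (∀ g : G, ∀ χ ∈ X, IsNilpotent (((ρ g : R) - algebraMap ℂ R (χ g)) * π χ)) := by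
  classical
  have hcomm : ∀ a ∈ (Set.range fun g : G => ((ρ g : Rˣ) : R)),
      ∀ b ∈ (Set.range fun g : G => ((ρ g : Rˣ) : R)), a * b = b * a := by
    rintro _ ⟨g, rfl⟩ _ ⟨h, rfl⟩
    show ((ρ g : Rˣ) : R) * ((ρ h : Rˣ) : R) = ((ρ h : Rˣ) : R) * ((ρ g : Rˣ) : R)
    have : ρ g * ρ h = ρ h * ρ g := by rw [← map_mul, ← map_mul, mul_comm]
    exact_mod_cast congrArg Units.val this
  set A := Algebra.adjoin ℂ (Set.range fun g : G => ((ρ g : Rˣ) : R)) with hA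
  have hcomm' : ∀ x y : A, x * y = y * x := by
    letI := Algebra.adjoinCommRingOfComm ℂ hcomm
    exact fun x y => mul_comm x y
  have hmem : ∀ g : G, ((ρ g : Rˣ) : R) ∈ A := fun g => Algebra.subset_adjoin ⟨g, rfl⟩
  have hmem' : ∀ g : G, (((ρ g)⁻¹ : Rˣ) : R) ∈ A := by
    intro g
    have : ((ρ g)⁻¹ : Rˣ) = ρ g⁻¹ := by rw [map_inv]
    rw [this]
    exact hmem g⁻¹
  let ρA : G →* Aˣ :=
    { toFun := fun g =>
        { val := ⟨((ρ g : Rˣ) : R), hmem g⟩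
          inv := ⟨(((ρ g)⁻¹ : Rˣ) : R), hmem' g⟩
          val_inv := by ext; simp
          inv_val := by ext; simp }
      map_one' := by ext; simp
      map_mul' := fun g h => by ext; simp }
  obtain ⟨X, πA, h1, h2, h4, h5, h6⟩ := my_aux A hcomm' G ρA
  refine ⟨X, fun χ => (πA χ : R), ?_, ?_, ?_, ?_, ?_, ?_⟩
  · intro χ hχ h0
    have h0' : (πA χ : R) = 0 := h0
    exact h1 χ hχ (by exact_mod_cast h0')
  · intro χ hχ
    have := h2 χ hχ
    simpa [IsIdempotentElem, ← MulMemClass.coe_mul] using congrArg Subtype.val this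
  · exact fun χ _ => (πA χ).2
  · intro χ hχ ψ hψ hne
    have := h4 χ hχ ψ hψ hne
    calc (πA χ : R) * (πA ψ : R) = ((πA χ * πA ψ : A) : R) := by push_cast; ring
    _ = ((0 : A) : R) := by rw [this]
    _ = 0 := by simp
  · have := congrArg (Subtype.val) h5
    simpa using this
  · intro g χ hχ
    have hn := h6 g χ hχ
    have hmap := hn.map A.val
    have key : A.val ((((ρA g : Aˣ) : A) - algebraMap ℂ A (χ g)) * πA χ)
        = ((ρ g : R) - algebraMap ℂ R (χ g)) * (πA χ : R) := by
      rw [map_mul, map_sub, AlgHom.commutes]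
      rfl
    rw [key] at hmap
    exact hmap
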